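/- Let F be a field and n ≥ 1. For any real number R > 1 there exists a constant c (depending only on n and R) such that for every integer K ≥ 1, the number of monomial ideals in M_n(K) satisfies |M_n(K)| ≤ c · R^{K^{3/2}}. -/

import Mathlib

open MvPolynomial

/-- An ideal of `F[X_1,…,X_n]` is a *monomial ideal* if it is generated by
a set of monomials `X^a = X_1^{a_1} ⋯ X_n^{a_n}`. -/
def IsMonomialIdeal {n : ℕ} {F : Type} [Field F] (I : Ideal (MvPolynomial (Fin n) F)) : Prop :=
  ∃ S : Set (Fin n →₀ ℕ), I = Ideal.span ((fun a => (monomial a (1 : F))) '' S)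

set_option synthInstance.maxHeartbeats 1000000
set_option maxHeartbeats 1000000
set_option linter.unusedVariables false

variable {F : Type} [Field F] {n : ℕ}

lemma aux_mem_of_le {I : Ideal (MvPolynomial (Fin n) F)} {a b : Fin n →₀ ℕ}
    (hba : b ≤ a) (hb : monomial b (1:F) ∈ I) : monomial a (1:F) ∈ I := by
  have h : monomial (a - b) (1:F) * monomial b (1:F) = monomial a (1:F) := by
    rw [monomial_mul, one_mul, tsub_add_cancel_of_le hba]
  rw [← h]
  exact Ideal.mul_mem_left _ _ hb

lemma aux_span_self {I : Ideal (MvPolynomial (Fin n) F)} (h : IsMonomialIdeal I) :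
    I = Ideal.span ((fun a => monomial a (1:F)) '' {a | monomial a (1:F) ∈ I}) := by
  obtain ⟨S, rfl⟩ := h
  apply le_antisymm
  · apply Ideal.span_mono
    apply Set.image_mono
    intro a ha
    exact Ideal.subset_span (Set.mem_image_of_mem _ ha)
  · rw [Ideal.span_le]
    rintro x ⟨a, ha, rfl⟩
    exact ha

lemma aux_indep {I : Ideal (MvPolynomial (Fin n) F)} (h : IsMonomialIdeal I) :
    LinearIndependent F (fun a : {a : Fin n →₀ ℕ // monomial a (1:F) ∉ I} =>
      Ideal.Quotient.mkₐ F I (monomial a.1 (1:F))) := by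
  rw [linearIndependent_iff']
  intro s g hsum i hi
  by_contra hgi
  set p : MvPolynomial (Fin n) F := ∑ a ∈ s, g a • monomial a.1 (1:F) with hp
  have hpI : p ∈ I := by
    rw [← Ideal.Quotient.eq_zero_iff_mem]
    have : Ideal.Quotient.mk I p = Ideal.Quotient.mkₐ F I p := rfl
    rw [this, hp, map_sum]
    simpa using hsum
  have hcoeff : coeff i.1 p = g i := by
    rw [hp, coeff_sum]
    have hterm : ∀ a ∈ s, coeff i.1 (g a • monomial a.1 (1:F)) = if a = i then g a else 0 := by
      intro a _
      rw [coeff_smul, coeff_monomial]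
      by_cases hai : a = i
      · simp [hai]
      · have : ¬ (a.1 = i.1) := fun hv => hai (Subtype.ext hv)
        simp [hai, this]
    rw [Finset.sum_congr rfl hterm, Finset.sum_ite_eq' s i g, if_pos hi]
  have hsupp : i.1 ∈ p.support := mem_support_iff.mpr (by rw [hcoeff]; exact hgi)
  obtain ⟨S, hS⟩ := h
  rw [hS, mem_ideal_span_monomial_image] at hpI
  obtain ⟨b, hbS, hble⟩ := hpI i.1 hsupp
  have hbI : monomial b (1:F) ∈ I := hS ▸ Ideal.subset_span ⟨b, hbS, rfl⟩
  exact i.2 (aux_mem_of_le hble hbI)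

lemma aux_span {I : Ideal (MvPolynomial (Fin n) F)} :
    ⊤ ≤ Submodule.span F (Set.range (fun a : {a : Fin n →₀ ℕ // monomial a (1:F) ∉ I} =>
      Ideal.Quotient.mkₐ F I (monomial a.1 (1:F)))) := by
  rintro x -
  obtain ⟨p, rfl⟩ := Ideal.Quotient.mk_surjective x
  have : Ideal.Quotient.mk I p = Ideal.Quotient.mkₐ F I p := rfl
  rw [this]
  rw [show p = ∑ v ∈ p.support, monomial v (coeff v p) from p.as_sum, map_sum]
  apply Submodule.sum_mem
  intro a ha
  have hmono : monomial a (p.coeff a) = p.coeff a • monomial a (1:F) := by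
    rw [smul_monomial, smul_eq_mul, mul_one]
  by_cases hstd : monomial a (1:F) ∈ I
  · have : Ideal.Quotient.mkₐ F I (monomial a (p.coeff a)) = 0 := by
      rw [hmono, map_smul]
      have : Ideal.Quotient.mkₐ F I (monomial a (1:F)) = 0 := by
        rw [show Ideal.Quotient.mkₐ F I (monomial a (1:F)) = Ideal.Quotient.mk I (monomial a (1:F)) from rfl]
        exact Ideal.Quotient.eq_zero_iff_mem.mpr hstd
      rw [this, smul_zero]
    rw [this]
    exact Submodule.zero_mem _
  · rw [hmono, map_smul]
    exact Submodule.smul_mem _ _ (Submodule.subset_span ⟨⟨a, hstd⟩, rfl⟩)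

lemma aux_std {I : Ideal (MvPolynomial (Fin n) F)} (h : IsMonomialIdeal I) {K : ℕ} (hK : 1 ≤ K)
    (hfr : Module.finrank F (MvPolynomial (Fin n) F ⧸ I) = K) :
    {a : Fin n →₀ ℕ | monomial a (1:F) ∉ I}.ncard = K ∧
    ∀ a : Fin n →₀ ℕ, monomial a (1:F) ∉ I → ∀ i, a i < K := by
  have hfd : Module.Finite F (MvPolynomial (Fin n) F ⧸ I) :=
    Module.finite_of_finrank_pos (by rw [hfr]; omega)
  let b : Module.Basis _ F _ := Module.Basis.mk (aux_indep h) aux_span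
  haveI : Finite {a : Fin n →₀ ℕ // monomial a (1:F) ∉ I} := Module.Finite.finite_basis b
  haveI := Fintype.ofFinite {a : Fin n →₀ ℕ // monomial a (1:F) ∉ I}
  have hcard : Fintype.card {a : Fin n →₀ ℕ // monomial a (1:F) ∉ I} = K := by
    rw [← Module.finrank_eq_card_basis b, hfr]
  constructor
  · have hnc : Nat.card {a : Fin n →₀ ℕ // monomial a (1:F) ∉ I} = K := by
      rw [Nat.card_eq_fintype_card, hcard]
    rw [← Nat.card_coe_set_eq]
    exact hnc
  · intro a haI i
    have hupd : ∀ k : ℕ, k ≤ a i → monomial (a.update i k) (1:F) ∉ I := by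
      intro k hk hmem
      apply haI
      apply aux_mem_of_le _ hmem
      rw [Finsupp.le_def]
      intro j
      rw [Finsupp.coe_update, Function.update_apply]
      rcases eq_or_ne j i with rfl | hj
      · simpa using hk
      · simp [hj]
    have hinj : Function.Injective (fun k : Fin (a i + 1) =>
        (⟨a.update i k.1, hupd k.1 (Nat.lt_succ_iff.mp k.2)⟩ :
          {a : Fin n →₀ ℕ // monomial a (1:F) ∉ I})) := by
      intro k k' hkk
      have := congrArg (fun x => (x : {a : Fin n →₀ ℕ // monomial a (1:F) ∉ I}).1 i) hkk
      simp only [Finsupp.coe_update, Function.update_self] at this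
      exact Fin.ext this
    have := Fintype.card_le_of_injective _ hinj
    rw [hcard, Fintype.card_fin] at this
    omega

lemma aux_count {K : ℕ} (hK : 1 ≤ K) :
    ({I : Ideal (MvPolynomial (Fin n) F) | IsMonomialIdeal I ∧
        Module.finrank F (MvPolynomial (Fin n) F ⧸ I) = K}.ncard) ≤ (K ^ n).choose K := by
  classical
  set B : Finset (Fin n →₀ ℕ) :=
    Finset.image (fun f : Fin n → Fin K => Finsupp.equivFunOnFinite.symm (fun i => (f i : ℕ)))
      Finset.univ with hB
  have hBmem : ∀ a : Fin n →₀ ℕ, (∀ i, a i < K) → a ∈ B := by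
    intro a ha
    rw [hB, Finset.mem_image]
    refine ⟨fun i => ⟨a i, ha i⟩, Finset.mem_univ _, ?_⟩
    have h1 : (fun i => (((⟨a i, ha i⟩ : Fin K)) : ℕ)) = ⇑a := rfl
    rw [h1, Finsupp.equivFunOnFinite_symm_coe]
  have hBcard : B.card ≤ K ^ n := by
    refine le_trans Finset.card_image_le ?_
    simp
  set f : Ideal (MvPolynomial (Fin n) F) → Finset (Fin n →₀ ℕ) :=
    fun I => B.filter (fun a => monomial a (1:F) ∉ I) with hf
  have hfset : ∀ I ∈ {I : Ideal (MvPolynomial (Fin n) F) | IsMonomialIdeal I ∧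
      Module.finrank F (MvPolynomial (Fin n) F ⧸ I) = K},
      (↑(f I) : Set (Fin n →₀ ℕ)) = {a : Fin n →₀ ℕ | monomial a (1:F) ∉ I} := by
    rintro I ⟨hI, hIK⟩
    obtain ⟨-, hbound⟩ := aux_std hI hK hIK
    ext a
    simp only [hf, Finset.coe_filter, Set.mem_setOf_eq]
    constructor
    · rintro ⟨-, h2⟩; exact h2
    · intro h2; exact ⟨hBmem a (hbound a h2), h2⟩
  have hmap : ∀ I ∈ {I : Ideal (MvPolynomial (Fin n) F) | IsMonomialIdeal I ∧
      Module.finrank F (MvPolynomial (Fin n) F ⧸ I) = K},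
      f I ∈ (↑(B.powersetCard K) : Set (Finset (Fin n →₀ ℕ))) := by
    rintro I ⟨hI1, hI2⟩
    obtain ⟨hcard, -⟩ := aux_std hI1 hK hI2
    simp only [Finset.mem_coe]
    rw [Finset.mem_powersetCard]
    refine ⟨Finset.filter_subset _ _, ?_⟩
    rw [← Set.ncard_coe_finset, hfset I ⟨hI1, hI2⟩, hcard]
  have key := Set.ncard_le_ncard_of_injOn f hmap
    (by
      intro I hI J hJ hIJ
      have hstd : {a : Fin n →₀ ℕ | monomial a (1:F) ∉ I}
          = {a : Fin n →₀ ℕ | monomial a (1:F) ∉ J} := by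
        rw [← hfset I hI, ← hfset J hJ, hIJ]
      have hcompl : {a : Fin n →₀ ℕ | monomial a (1:F) ∈ I}
          = {a : Fin n →₀ ℕ | monomial a (1:F) ∈ J} := by
        ext a
        have := Set.ext_iff.mp hstd a
        simp only [Set.mem_setOf_eq] at this ⊢
        tauto
      rw [aux_span_self hI.1, aux_span_self hJ.1, hcompl])
    (Finset.finite_toSet _)
  rw [Set.ncard_coe_finset, Finset.card_powersetCard] at key
  exact le_trans key (le_trans (Nat.choose_mono K hBcard) le_rfl)

lemma aux_analytic (n : ℕ) (R : ℝ) (hR : 1 < R) :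
    ∃ K₀ : ℕ, 1 ≤ K₀ ∧ ∀ K : ℕ, K₀ ≤ K →
      ((K:ℝ)) ^ (n * K) ≤ R ^ ((K:ℝ) ^ ((3:ℝ)/2)) := by
  have hlog : (0:ℝ) < Real.log R := Real.log_pos hR
  have hc : (0:ℝ) < Real.log R / (n + 1) := by positivity
  have h := (isLittleO_log_rpow_atTop (by norm_num : (0:ℝ) < 1/2)).def hc
  rw [Filter.eventually_atTop] at h
  obtain ⟨x₀, hx₀⟩ := h
  refine ⟨max 1 ⌈x₀⌉₊, le_max_left _ _, ?_⟩
  intro K hKge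
  have hK1 : 1 ≤ K := le_trans (le_max_left _ _) hKge
  have hKpos : (0:ℝ) < K := by exact_mod_cast hK1
  have hKx : x₀ ≤ (K:ℝ) := by
    calc x₀ ≤ ⌈x₀⌉₊ := Nat.le_ceil x₀
    _ ≤ (K:ℝ) := by exact_mod_cast le_trans (le_max_right 1 ⌈x₀⌉₊) hKge
  have hbound := hx₀ (K:ℝ) hKx
  have hK1' : (1:ℝ) ≤ (K:ℝ) := by exact_mod_cast hK1
  have hlogK : 0 ≤ Real.log K := Real.log_nonneg hK1'
  have hs : (0:ℝ) ≤ (K:ℝ) ^ ((1:ℝ)/2) := Real.rpow_nonneg hKpos.le _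
  rw [Real.norm_eq_abs, Real.norm_eq_abs, abs_of_nonneg hlogK, abs_of_nonneg hs] at hbound
  have hmul : (K:ℝ) * (K:ℝ) ^ ((1:ℝ)/2) = (K:ℝ) ^ ((3:ℝ)/2) := by
    rw [show (3:ℝ)/2 = 1 + 1/2 by norm_num, Real.rpow_add hKpos, Real.rpow_one]
  have hlogineq : ((n * K : ℕ) : ℝ) * Real.log K ≤ (K:ℝ) ^ ((3:ℝ)/2) * Real.log R := by
    have h1 : ((n*K:ℕ):ℝ) * Real.log K
        ≤ ((n*K:ℕ):ℝ) * (Real.log R/(n+1) * (K:ℝ)^((1:ℝ)/2)) :=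
      mul_le_mul_of_nonneg_left hbound (by positivity)
    have hfrac : (n:ℝ)/(n+1) ≤ 1 := by
      rw [div_le_one (by positivity)]; linarith
    calc ((n*K:ℕ):ℝ) * Real.log K
        ≤ ((n*K:ℕ):ℝ) * (Real.log R/(n+1) * (K:ℝ)^((1:ℝ)/2)) := h1
      _ = ((n:ℝ)/(n+1)) * ((K:ℝ) * (K:ℝ)^((1:ℝ)/2)) * Real.log R := by push_cast; ring
      _ ≤ 1 * ((K:ℝ) * (K:ℝ)^((1:ℝ)/2)) * Real.log R := by
          apply mul_le_mul_of_nonneg_right _ hlog.le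
          apply mul_le_mul_of_nonneg_right hfrac (by positivity)
      _ = (K:ℝ)^((3:ℝ)/2) * Real.log R := by rw [one_mul, hmul]
  have hlogeq : Real.log ((K:ℝ) ^ (n*K)) = ((n*K:ℕ):ℝ) * Real.log K := Real.log_pow _ _
  have hlhs : ((K:ℝ)) ^ (n*K) = Real.exp (((n*K:ℕ):ℝ) * Real.log K) := by
    rw [← hlogeq, Real.exp_log (by positivity)]
  rw [hlhs, ← Real.exp_log (by positivity : (0:ℝ) < R ^ ((K:ℝ)^((3:ℝ)/2)))]
  apply Real.exp_le_exp.mpr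
  rw [Real.log_rpow (lt_trans one_pos hR)]
  exact hlogineq

/-- For any real `R > 1` there is a constant `c` (depending on `n` and `R`) such that
for all `K ≥ 1` the number of monomial ideals with `dim F[X]/I = K` is at most
`c · R^{K^{3/2}}`. -/
theorem statement_2 (F : Type) [Field F] (n : ℕ) (hn : 1 ≤ n) (R : ℝ) (hR : 1 < R) :
    ∃ c : ℝ, ∀ K : ℕ, 1 ≤ K →
      ({I : Ideal (MvPolynomial (Fin n) F) | IsMonomialIdeal I ∧
          Module.finrank F (MvPolynomial (Fin n) F ⧸ I) = K}.ncard : ℝ)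
        ≤ c * R ^ ((K : ℝ) ^ ((3 : ℝ) / 2)) := by
  obtain ⟨K₀, hK₀1, hK₀⟩ := aux_analytic n R hR
  refine ⟨((K₀ ^ (n * K₀) : ℕ) : ℝ), ?_⟩
  intro K hK
  have hcount : (({I : Ideal (MvPolynomial (Fin n) F) | IsMonomialIdeal I ∧
      Module.finrank F (MvPolynomial (Fin n) F ⧸ I) = K}.ncard : ℕ) : ℝ)
      ≤ ((K:ℝ)) ^ (n*K) := by
    have h1 := aux_count (F := F) (n := n) (K := K) hK
    have h2 : (K ^ n).choose K ≤ K ^ (n * K) := by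
      refine le_trans (Nat.choose_le_pow _ _) ?_
      rw [← pow_mul, Nat.mul_comm n K]
    have := le_trans h1 h2
    exact_mod_cast this
  have hRpos : (0:ℝ) < R ^ ((K:ℝ) ^ ((3:ℝ)/2)) :=
    Real.rpow_pos_of_pos (lt_trans one_pos hR) _
  have hR1 : (1:ℝ) ≤ R ^ ((K:ℝ) ^ ((3:ℝ)/2)) :=
    Real.one_le_rpow hR.le (Real.rpow_nonneg (Nat.cast_nonneg K) _)
  have hc1 : (1:ℝ) ≤ ((K₀ ^ (n * K₀) : ℕ) : ℝ) := by
    have : 1 ≤ K₀ ^ (n * K₀) := Nat.one_le_pow _ _ hK₀1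
    exact_mod_cast this
  rcases le_or_gt K₀ K with hle | hlt
  · calc (({I : Ideal (MvPolynomial (Fin n) F) | IsMonomialIdeal I ∧
        Module.finrank F (MvPolynomial (Fin n) F ⧸ I) = K}.ncard : ℕ) : ℝ)
        ≤ ((K:ℝ)) ^ (n*K) := hcount
      _ ≤ R ^ ((K:ℝ) ^ ((3:ℝ)/2)) := hK₀ K hle
      _ = 1 * R ^ ((K:ℝ) ^ ((3:ℝ)/2)) := (one_mul _).symm
      _ ≤ ((K₀ ^ (n * K₀) : ℕ) : ℝ) * R ^ ((K:ℝ) ^ ((3:ℝ)/2)) :=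
          mul_le_mul_of_nonneg_right hc1 hRpos.le
  · have hKK₀ : K ≤ K₀ := hlt.le
    have hnat : K ^ (n*K) ≤ K₀ ^ (n*K₀) :=
      le_trans (Nat.pow_le_pow_left hKK₀ _)
        (Nat.pow_le_pow_right hK₀1 (Nat.mul_le_mul_left n hKK₀))
    have hreal : ((K:ℝ)) ^ (n*K) ≤ ((K₀ ^ (n * K₀) : ℕ) : ℝ) := by exact_mod_cast hnat
    calc (({I : Ideal (MvPolynomial (Fin n) F) | IsMonomialIdeal I ∧
        Module.finrank F (MvPolynomial (Fin n) F ⧸ I) = K}.ncard : ℕ) : ℝ)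
        ≤ ((K:ℝ)) ^ (n*K) := hcount
      _ ≤ ((K₀ ^ (n * K₀) : ℕ) : ℝ) := hreal
      _ = ((K₀ ^ (n * K₀) : ℕ) : ℝ) * 1 := (mul_one _).symm
      _ ≤ ((K₀ ^ (n * K₀) : ℕ) : ℝ) * R ^ ((K:ℝ) ^ ((3:ℝ)/2)) :=
          mul_le_mul_of_nonneg_left hR1 (le_trans zero_le_one hc1)
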